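/- Let H be a real Hilbert space, S : H → H an operator, x_* ∈ H with Sx_* = 0, and suppose S is (1/2)-cocoercive and quasi-ν-strongly monotone at x_* for some ν > 0. Let x_{k+1} = x_k - η(Sx_k - e_k) for some error e_k ∈ H and η > 0. Then for any δ > 0 and ε ∈ (0, ν), if η < 1/(2(1+δ)), we have ‖x_{k+1} - x_*‖² ≤ (1 - η(ν - ε))‖x_k - x_*‖² + η(1/ε + η(1+δ)/δ)‖e_k‖². -/

import Mathlib

set_option maxHeartbeats 800000

theorem stmt_8 {H : Type*} [NormedAddCommGroup H] [InnerProductSpace ℝ H] [CompleteSpace H]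
    (S : H → H) (xstar : H) (hfix : S xstar = 0) (ν : ℝ) (hν : 0 < ν)
    (hcoco : ∀ x y, (inner ℝ (x - y) (S x - S y) : ℝ) ≥ (1 / 2) * ‖S x - S y‖ ^ 2)
    (hquasi : ∀ x, (inner ℝ (x - xstar) (S x) : ℝ) ≥ ν * ‖x - xstar‖ ^ 2)
    (η δ ε : ℝ) (hη : 0 < η) (hδ : 0 < δ) (hε : 0 < ε) (hεν : ε < ν)
    (hηb : η < 1 / (2 * (1 + δ)))
    (xk ek : H) :
    ‖(xk - η • (S xk - ek)) - xstar‖ ^ 2 ≤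
      (1 - η * (ν - ε)) * ‖xk - xstar‖ ^ 2 +
        η * (1 / ε + η * (1 + δ) / δ) * ‖ek‖ ^ 2 := by
  have hrw : (xk - η • (S xk - ek)) - xstar = (xk - xstar) - η • (S xk - ek) := by abel
  rw [hrw]
  set a := xk - xstar with ha
  set v := S xk - ek with hv
  have hexp : ‖a - η • v‖ ^ 2 =
      ‖a‖ ^ 2 - 2 * (η * inner ℝ a v) + η ^ 2 * ‖v‖ ^ 2 := by
    rw [@norm_sub_sq_real H, real_inner_smul_right, norm_smul]
    have : ‖η‖ = η := abs_of_pos hη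
    rw [this]; ring
  rw [hexp]
  have hinner : (inner ℝ a v : ℝ) = inner ℝ a (S xk) - inner ℝ a ek := by
    rw [hv, inner_sub_right]
  have hI1A : (inner ℝ a (S xk) : ℝ) ≥ ν * ‖a‖ ^ 2 := hquasi xk
  have hI1U : (inner ℝ a (S xk) : ℝ) ≥ (1 / 2) * ‖S xk‖ ^ 2 := by
    have := hcoco xk xstar
    rwa [hfix, sub_zero] at this
  -- Young on inner ℝ a ek
  have hI2 : 2 * (inner ℝ a ek : ℝ) ≤ ε * ‖a‖ ^ 2 + (1 / ε) * ‖ek‖ ^ 2 := by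
    have h1 : (inner ℝ a ek : ℝ) ≤ ‖a‖ * ‖ek‖ := real_inner_le_norm a ek
    have hid : ε * ‖a‖ ^ 2 + (1 / ε) * ‖ek‖ ^ 2 - 2 * (inner ℝ a ek : ℝ) =
        (1 / ε) * (ε * ‖a‖ - ‖ek‖) ^ 2 + 2 * (‖a‖ * ‖ek‖ - (inner ℝ a ek : ℝ)) := by
      field_simp; ring
    have hpos : (0:ℝ) ≤ (1 / ε) * (ε * ‖a‖ - ‖ek‖) ^ 2 := by positivity
    linarith
  -- bound ‖v‖²
  have hV : ‖v‖ ^ 2 ≤ (1 + δ) * ‖S xk‖ ^ 2 + (1 + 1 / δ) * ‖ek‖ ^ 2 := by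
    have h1 : ‖v‖ ≤ ‖S xk‖ + ‖ek‖ := norm_sub_le _ _
    have h2 : ‖v‖ ^ 2 ≤ (‖S xk‖ + ‖ek‖) ^ 2 := by
      have := norm_nonneg v
      nlinarith [norm_nonneg (S xk), norm_nonneg ek]
    have hid : (1 + δ) * ‖S xk‖ ^ 2 + (1 + 1 / δ) * ‖ek‖ ^ 2 - (‖S xk‖ + ‖ek‖) ^ 2 =
        (1 / δ) * (δ * ‖S xk‖ - ‖ek‖) ^ 2 := by
      field_simp; ring
    have hpos : (0:ℝ) ≤ (1 / δ) * (δ * ‖S xk‖ - ‖ek‖) ^ 2 := by positivity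
    linarith
  have hηδ : 2 * η * (1 + δ) < 1 := by
    rw [lt_div_iff₀ (by positivity)] at hηb
    linarith
  have h1' : (0:ℝ) ≤ 1 - 2 * η * (1 + δ) := by linarith
  have hAnn : (0:ℝ) ≤ ‖a‖ ^ 2 := sq_nonneg _
  rw [hinner]
  have step1 : η ^ 2 * ‖v‖ ^ 2 ≤
      η ^ 2 * ((1 + δ) * ‖S xk‖ ^ 2 + (1 + 1 / δ) * ‖ek‖ ^ 2) :=
    mul_le_mul_of_nonneg_left hV (sq_nonneg η)
  have step2 : η ^ 2 * (1 + δ) * ‖S xk‖ ^ 2 ≤ η ^ 2 * (1 + δ) * (2 * inner ℝ a (S xk)) :=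
    mul_le_mul_of_nonneg_left (by linarith) (by positivity)
  have step3 : η * (2 * (inner ℝ a ek : ℝ)) ≤ η * (ε * ‖a‖ ^ 2 + (1 / ε) * ‖ek‖ ^ 2) :=
    mul_le_mul_of_nonneg_left hI2 hη.le
  have step4 : (0:ℝ) ≤ η * (1 - 2 * η * (1 + δ)) * ((inner ℝ a (S xk) : ℝ) - ν * ‖a‖ ^ 2) :=
    mul_nonneg (mul_nonneg hη.le h1') (by linarith)
  have step5 : η * (inner ℝ a (S xk) : ℝ) ≥ η * (ν * ‖a‖ ^ 2) :=
    mul_le_mul_of_nonneg_left hI1A hη.le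
  have step6 : (0:ℝ) ≤ η * ν * ‖a‖ ^ 2 * (1 - 2 * η * (1 + δ)) :=
    mul_nonneg (mul_nonneg (mul_nonneg hη.le hν.le) hAnn) h1'
  have hgoal : η * (1 / ε + η * (1 + δ) / δ) * ‖ek‖ ^ 2 =
      η * (1 / ε) * ‖ek‖ ^ 2 + η ^ 2 * (1 + 1 / δ) * ‖ek‖ ^ 2 := by
    field_simp; ring
  nlinarith [step1, step2, step3, step4, step5, step6]
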